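/- (Theorem 6.15 and Proposition 6.16(P3): basis-independence of the trace.) Let T : H →L[K] H be of trace class and let U : H →L[K] H be unitary (surjective, isometric, inner-product-preserving). Then the series ∑ m, ⟪U (e m), T (U (e m))⟫ converges and its sum equals the trace computed in the standard basis: HasSum (fun m => ⟪U (e m), T (U (e m))⟫) (∑' m, (T (e m)) m). -/

import Mathlib

open Filter

set_option maxHeartbeats 1000000

noncomputable section

variable (K : Type*) [NontriviallyNormedField K] [IsUltrametricDist K]
  [CompleteSpace K] [StarRing K] [NormedStarGroup K]

/-- The p-adic coordinate Hilbert space: zero-convergent sequences in `K` with sup norm. -/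
abbrev H := ZeroAtInftyContinuousMap ℕ K

/-- The standard basis vectors of `H K`. -/
def e (n : ℕ) : H K where
  toFun := fun m => if m = n then 1 else 0
  continuous_toFun := continuous_of_discreteTopology
  zero_at_infty' := by
    rw [cocompact_eq_atTop (α := ℕ)]
    refine Filter.Tendsto.congr' ?_ tendsto_const_nhds
    filter_upwards [Filter.eventually_gt_atTop n] with m hm
    simp [Nat.ne_of_gt hm]

/-- The canonical inner product on `H K`: `⟪x, y⟫ = ∑' i, star (x i) * y i`. -/
def inner' (x y : H K) : K := ∑' i, star (x i) * y i

/-- A bounded operator is of trace class if its matrix entries vanish along the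
cofinite filter of `ℕ × ℕ`. -/
def IsTraceClass (T : H K →L[K] H K) : Prop :=
  Tendsto (fun q : ℕ × ℕ => (T (e K q.2)) q.1) Filter.cofinite (nhds 0)

/-! ### Auxiliary lemmas -/

/-- Any ultrametric normed additive group is nonarchimedean. -/
instance (priority := 100) aux_nonarchimedean {G : Type*} [NormedAddCommGroup G]
    [IsUltrametricDist G] : NonarchimedeanAddGroup G where
  is_nonarchimedean := by
    intro Uu hU
    rcases Metric.mem_nhds_iff.mp hU with ⟨ε, hε, hball⟩
    refine ⟨⟨⟨⟨⟨{x : G | ‖x‖ < ε}, ?_⟩, ?_⟩, ?_⟩, ?_⟩,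
      fun x hx => hball (by have hx' : ‖x‖ < ε := hx; simpa [Metric.mem_ball, dist_eq_norm] using hx')⟩
    · intro a b ha hb
      exact lt_of_le_of_lt (IsUltrametricDist.norm_add_le_max a b) (max_lt ha hb)
    · simpa using hε
    · intro a ha; simpa using ha
    · simpa [Metric.ball, dist_eq_norm] using Metric.isOpen_ball (x := (0:G)) (ε := ε)

theorem aux_summable_of_cof {α G : Type*} [NormedAddCommGroup G] [IsUltrametricDist G]
    [CompleteSpace G] {f : α → G} (h : Tendsto f cofinite (nhds 0)) : Summable f :=
  NonarchimedeanAddGroup.summable_of_tendsto_cofinite_zero h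

instance aux_ultra_H : IsUltrametricDist (H K) where
  dist_triangle_max x y z := by
    rw [← ZeroAtInftyContinuousMap.dist_toBCF_eq_dist (f := x) (g := z),
      ← ZeroAtInftyContinuousMap.dist_toBCF_eq_dist (f := x) (g := y),
      ← ZeroAtInftyContinuousMap.dist_toBCF_eq_dist (f := y) (g := z)]
    refine (BoundedContinuousFunction.dist_le (le_max_iff.mpr (Or.inl dist_nonneg))).mpr
      fun t => ?_
    exact le_trans (IsUltrametricDist.dist_triangle_max _ (y.toBCF t) _)
      (max_le_max (BoundedContinuousFunction.dist_coe_le_dist t)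
        (BoundedContinuousFunction.dist_coe_le_dist t))

theorem aux_norm_apply_le (f : H K) (n : ℕ) : ‖f n‖ ≤ ‖f‖ := by
  rw [← ZeroAtInftyContinuousMap.norm_toBCF_eq_norm]
  exact f.toBCF.norm_coe_le_norm n

theorem aux_norm_le (f : H K) {C : ℝ} (hC : 0 ≤ C) (h : ∀ n, ‖f n‖ ≤ C) : ‖f‖ ≤ C := by
  rw [← ZeroAtInftyContinuousMap.norm_toBCF_eq_norm]
  exact (BoundedContinuousFunction.norm_le hC).mpr h

theorem aux_tendsto_coeff (f : H K) : Tendsto (fun n => f n) cofinite (nhds 0) := by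
  have := zero_at_infty (f : H K)
  rwa [cocompact_eq_atTop (α := ℕ), ← Nat.cofinite_eq_atTop] at this

@[simp] theorem e_apply (n m : ℕ) : (e K n) m = if m = n then 1 else 0 := rfl

theorem aux_norm_e (n : ℕ) : ‖e K n‖ = 1 := by
  refine le_antisymm (aux_norm_le K _ zero_le_one fun m => ?_) ?_
  · by_cases h : m = n <;> simp [h]
  · have := aux_norm_apply_le K (e K n) n
    simpa [Function.comp] using this

/-- Evaluation at a coordinate, as a continuous linear map. -/
def evalCLM (n : ℕ) : H K →L[K] K :=
  LinearMap.mkContinuous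
    { toFun := fun f => f n
      map_add' := fun f g => rfl
      map_smul' := fun c f => rfl }
    1 (fun f => by simpa using aux_norm_apply_le K f n)

@[simp] theorem evalCLM_apply (n : ℕ) (f : H K) : evalCLM K n f = f n := rfl

theorem aux_hasSum_basis (y : H K) : HasSum (fun i => y i • e K i) y := by
  have hs : Summable (fun i => y i • e K i) := by
    refine aux_summable_of_cof (squeeze_zero_norm (a := fun i => ‖y i‖) (fun i => ?_) ?_)
    · refine aux_norm_le K _ (norm_nonneg _) fun n => ?_
      have hc : (y i • e K i) n = y i * (e K i) n := rfl
      rw [hc, norm_mul]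
      by_cases h : n = i <;> simp [h]
    · simpa using (aux_tendsto_coeff K y).norm
  obtain ⟨g, hg⟩ := hs
  have hgy : g = y := by
    ext n
    have h1 := hg.mapL (evalCLM K n)
    have h2 : (fun i => evalCLM K n (y i • e K i)) = fun i => if i = n then y n else 0 := by
      funext i
      by_cases h : i = n <;> simp [h, Ne.symm, smul_eq_mul]
    rw [h2] at h1
    exact ((hasSum_ite_eq n (y n)).unique h1).symm
  rwa [hgy] at hg

theorem aux_summable_inner (x y : H K) : Summable (fun i => star (x i) * y i) := by
  refine aux_summable_of_cof (squeeze_zero_norm (a := fun i => ‖x‖ * ‖y i‖) (fun i => ?_) ?_)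
  · rw [norm_mul, norm_star]
    exact mul_le_mul_of_nonneg_right (aux_norm_apply_le K x i) (norm_nonneg _)
  · simpa using ((aux_tendsto_coeff K y).norm.const_mul ‖x‖)

theorem aux_hasSum_inner (x y : H K) :
    HasSum (fun i => star (x i) * y i) (inner' K x y) :=
  (aux_summable_inner K x y).hasSum

theorem hasSum_inner'_e_left (m : ℕ) (x : H K) :
    HasSum (fun i => star ((e K m) i) * x i) (x m) := by
  have h0 : (fun i => star ((e K m) i) * x i) = fun i => if i = m then x m else 0 := by
    funext i; by_cases h : i = m <;> simp [h]
  rw [h0]; exact hasSum_ite_eq m (x m)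

theorem inner'_e_left (m : ℕ) (x : H K) : inner' K (e K m) x = x m :=
  (hasSum_inner'_e_left K m x).tsum_eq

theorem inner'_e_right (x : H K) (j : ℕ) : inner' K x (e K j) = star (x j) := by
  have h : HasSum (fun i => star (x i) * (e K j) i) (star (x j)) := by
    have h0 : (fun i => star (x i) * (e K j) i) = fun i => if i = j then star (x j) else 0 := by
      funext i; by_cases h : i = j <;> simp [h]
    rw [h0]; exact hasSum_ite_eq j (star (x j))
  exact h.tsum_eq

/-- The trace of a trace class operator does not depend on the orthonormal basis. -/
theorem stmt11 (U T : H K →L[K] H K)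
    (hUsurj : Function.Surjective U) (hUiso : ∀ x : H K, ‖U x‖ = ‖x‖)
    (hUip : ∀ x y : H K, inner' K (U x) (U y) = inner' K x y)
    (hT : IsTraceClass K T) :
    HasSum (fun m => inner' K (U (e K m)) (T (U (e K m)))) (∑' m, (T (e K m)) m) := by
  classical
  choose V hV using hUsurj
  -- the matrix entries
  set A : ℕ × ℕ × ℕ → K :=
    fun p => star ((U (e K p.1)) p.2.1) * ((T (e K p.2.2)) p.2.1 * (U (e K p.1)) p.2.2) with hAdef
  -- rows of U are coordinates of V applied to basis vectors
  have hrow : ∀ j m, (V (e K j)) m = star ((U (e K m)) j) := by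
    intro j m
    have h2 := hUip (e K m) (V (e K j))
    rw [hV] at h2
    rw [← inner'_e_left K m (V (e K j)), ← h2, inner'_e_right]
  -- norm bounds
  have hub : ∀ m j, ‖(U (e K m)) j‖ ≤ 1 := by
    intro m j
    refine (aux_norm_apply_le K _ j).trans ?_
    rw [hUiso, aux_norm_e]
  have hTb : ∀ j i, ‖(T (e K i)) j‖ ≤ ‖T‖ := by
    intro j i
    refine (aux_norm_apply_le K _ j).trans ?_
    have := T.le_opNorm (e K i)
    rwa [aux_norm_e, mul_one] at this
  -- summability of the triple family
  have hA : Tendsto A cofinite (nhds 0) := by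
    rw [Metric.tendsto_nhds]
    intro ε hε
    rw [Filter.eventually_cofinite]
    have hF : {q : ℕ × ℕ | ¬ dist ((T (e K q.2)) q.1) 0 < ε}.Finite := by
      have h0 := hT
      rw [IsTraceClass, Metric.tendsto_nhds] at h0
      exact Filter.eventually_cofinite.mp (h0 ε hε)
    set B : ℝ := ‖T‖ + 1 with hB
    have hB0 : (0:ℝ) < B := by positivity
    have hG : ∀ j : ℕ, {m : ℕ | ¬ ‖(U (e K m)) j‖ < ε / B}.Finite := by
      intro j
      have h0 := aux_tendsto_coeff K (V (e K j))
      rw [Metric.tendsto_nhds] at h0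
      have h1 := Filter.eventually_cofinite.mp (h0 (ε / B) (by positivity))
      refine h1.subset ?_
      intro m hm hm2
      apply hm
      rw [dist_zero_right, hrow, norm_star] at hm2
      exact hm2
    refine Set.Finite.subset (Set.Finite.biUnion hF
      (fun q _ => Set.Finite.image (fun m => ((m, q) : ℕ × ℕ × ℕ)) (hG q.1))) ?_
    rintro ⟨m, j, i⟩ hp
    rw [Set.mem_setOf_eq, dist_zero_right, not_lt] at hp
    have hAn : ‖A (m, j, i)‖
        = ‖(U (e K m)) j‖ * (‖(T (e K i)) j‖ * ‖(U (e K m)) i‖) := by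
      simp [hAdef, norm_mul, norm_star]
    have hTji : ε ≤ ‖(T (e K i)) j‖ := by
      refine hp.trans ?_
      rw [hAn]
      calc ‖(U (e K m)) j‖ * (‖(T (e K i)) j‖ * ‖(U (e K m)) i‖)
          ≤ 1 * (‖(T (e K i)) j‖ * 1) := by
            gcongr
            · exact hub m j
            · exact hub m i
        _ = ‖(T (e K i)) j‖ := by ring
    have hm : ε / B ≤ ‖(U (e K m)) j‖ := by
      have h1 : ‖(T (e K i)) j‖ * ‖(U (e K m)) i‖ ≤ B := by
        calc ‖(T (e K i)) j‖ * ‖(U (e K m)) i‖ ≤ ‖T‖ * 1 := by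
              gcongr
              · exact hTb j i
              · exact hub m i
          _ ≤ B := by rw [mul_one, hB]; linarith
      have h2 : ε ≤ ‖(U (e K m)) j‖ * B := by
        refine hp.trans ?_
        rw [hAn]
        exact mul_le_mul_of_nonneg_left h1 (norm_nonneg _)
      exact (div_le_iff₀ hB0).mpr h2
    refine Set.mem_biUnion (show (j, i) ∈ _ from ?_) ?_
    · rw [Set.mem_setOf_eq, dist_zero_right, not_lt]
      exact hTji
    · exact ⟨m, by rw [Set.mem_setOf_eq, not_lt]; exact hm, rfl⟩
  have hAs : Summable A := aux_summable_of_cof hA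
  -- fiberwise sums over the innermost index
  have hfib1 : ∀ m j, HasSum (fun i => A (m, j, i))
      (star ((U (e K m)) j) * (T (U (e K m))) j) := by
    intro m j
    have h1 := aux_hasSum_basis K (U (e K m))
    have h2 := h1.mapL T
    have h3 := h2.mapL (evalCLM K j)
    have h4 := h3.mul_left (star ((U (e K m)) j))
    have h5 : (fun i => star ((U (e K m)) j) * evalCLM K j (T ((U (e K m)) i • e K i)))
        = fun i => A (m, j, i) := by
      funext i
      rw [map_smul, map_smul, evalCLM_apply, smul_eq_mul, hAdef]
      ring
    rw [h5] at h4
    exact h4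
  -- fiberwise sums over pairs give the inner products
  have hfib2 : ∀ m, HasSum (fun ji : ℕ × ℕ => A (m, ji))
      (inner' K (U (e K m)) (T (U (e K m)))) := by
    intro m
    have hinj : Function.Injective (fun ji : ℕ × ℕ => ((m, ji) : ℕ × ℕ × ℕ)) :=
      fun a b h => (Prod.ext_iff.mp h).2
    have hs : Summable (fun ji : ℕ × ℕ => A (m, ji)) := hAs.comp_injective hinj
    have h6 := hs.hasSum.prod_fiberwise (fun j => hfib1 m j)
    have h7 := (aux_hasSum_inner K (U (e K m)) (T (U (e K m)))).unique h6
    rw [h7]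
    exact hs.hasSum
  -- the main summation formula
  have hmain := hAs.hasSum.prod_fiberwise hfib2
  -- regroup: sum over m first
  have hA' : HasSum (fun p : (ℕ × ℕ) × ℕ => A (p.2, p.1)) (∑' p, A p) :=
    ((Equiv.prodComm (ℕ × ℕ) ℕ).hasSum_iff).mpr hAs.hasSum
  have hδ : ∀ j i, HasSum (fun m => A (m, j, i))
      ((T (e K i)) j * (if j = i then 1 else 0)) := by
    intro j i
    have h1 := aux_hasSum_inner K (V (e K j)) (V (e K i))
    have h2 := h1.star
    have h3 := h2.mul_left ((T (e K i)) j)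
    have hval : star (inner' K (V (e K j)) (V (e K i))) = (if j = i then 1 else 0) := by
      have h4 := hUip (V (e K j)) (V (e K i))
      rw [hV, hV] at h4
      rw [← h4, inner'_e_left]
      by_cases h : j = i <;> simp [h]
    rw [hval] at h3
    have hfun : (fun m => (T (e K i)) j * star (star ((V (e K j)) m) * (V (e K i)) m))
        = fun m => A (m, j, i) := by
      funext m
      rw [hrow, hrow, hAdef]
      simp only [star_mul, star_star]
      ring
    rw [hfun] at h3
    exact h3
  have hdiagsum : HasSum (fun ji : ℕ × ℕ => (T (e K ji.2)) ji.1 * (if ji.1 = ji.2 then 1 else 0))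
      (∑' p, A p) :=
    hA'.prod_fiberwise (fun ji => hδ ji.1 ji.2)
  have hdiag : HasSum (fun n => (T (e K n)) n) (∑' p, A p) := by
    have hinj : Function.Injective (fun n : ℕ => ((n, n) : ℕ × ℕ)) :=
      fun a b h => (Prod.ext_iff.mp h).1
    have hoff : ∀ ji : ℕ × ℕ, ji ∉ Set.range (fun n : ℕ => ((n, n) : ℕ × ℕ)) →
        (T (e K ji.2)) ji.1 * (if ji.1 = ji.2 then 1 else 0) = 0 := by
      rintro ⟨j, i⟩ h
      have hne : j ≠ i := by
        intro hji
        exact h ⟨j, by rw [hji]⟩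
      simp [hne]
    have h9 := (Function.Injective.hasSum_iff hinj hoff).mpr hdiagsum
    have h10 : ((fun ji : ℕ × ℕ => (T (e K ji.2)) ji.1 * (if ji.1 = ji.2 then 1 else 0)) ∘
        (fun n : ℕ => ((n, n) : ℕ × ℕ))) = fun n => (T (e K n)) n := by
      funext n; simp
    rwa [h10] at h9
  rw [hdiag.tsum_eq]
  exact hmain
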